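/- Let Ψ ∈ ℂ^{K×K} be Hermitian positive definite, W ∈ ℂ^{K×K}, H ∈ ℂ^{K×N}, σ² > 0, P > 0, and set V = (σ²/P)·Tr(Ψ WᴴW)·I_N + Hᴴ W Ψ Wᴴ H, assumed invertible. Then Tr(Ψ) − Tr(Ψ Wᴴ H V^{−1} Hᴴ W Ψ) = Tr((Ψ^{−1} + (P/(σ²·Tr(Ψ WᴴW)))·Wᴴ H Hᴴ W)^{−1}). -/

import Mathlib

open Matrix
open scoped ComplexOrder

/-- trace of `Aᴴ * A` vanishes only for `A = 0` (over `ℂ`). -/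
lemma trace_conjTranspose_mul_self_eq_zero' {m n : ℕ}
    {A : Matrix (Fin m) (Fin n) ℂ} (h : (Aᴴ * A).trace = 0) : A = 0 := by
  have h' : ∑ j : Fin n, ∑ i : Fin m, Complex.normSq (A i j) = 0 := by
    have := congrArg Complex.re h
    simpa [Matrix.trace, Matrix.diag, Matrix.mul_apply, Matrix.conjTranspose_apply,
      Complex.normSq_eq_conj_mul_self, Complex.re_sum, Complex.normSq_apply] using this
  ext i j
  have := (Finset.sum_eq_zero_iff_of_nonneg (fun j _ => Finset.sum_nonneg
    (fun i _ => Complex.normSq_nonneg (A i j)))).1 h' j (Finset.mem_univ j)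
  have := (Finset.sum_eq_zero_iff_of_nonneg
    (fun i _ => Complex.normSq_nonneg (A i j))).1 this i (Finset.mem_univ i)
  simpa using Complex.normSq_eq_zero.1 this

theorem stmt_14 (K N : ℕ) (Ψ W : Matrix (Fin K) (Fin K) ℂ)
    (H : Matrix (Fin K) (Fin N) ℂ) (σ2 P : ℝ) (hσ : 0 < σ2) (hP : 0 < P)
    (hΨ : Ψ.PosDef)
    (V : Matrix (Fin N) (Fin N) ℂ)
    (hV : V = (((σ2 / P : ℝ) : ℂ) * (Ψ * Wᴴ * W).trace) • (1 : Matrix (Fin N) (Fin N) ℂ)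
      + Hᴴ * W * Ψ * Wᴴ * H)
    (hVinv : IsUnit V.det) :
    Ψ.trace - (Ψ * Wᴴ * H * V⁻¹ * Hᴴ * W * Ψ).trace
      = (Ψ⁻¹ + ((P : ℂ) / ((σ2 : ℂ) * (Ψ * Wᴴ * W).trace)) • (Wᴴ * H * Hᴴ * W))⁻¹.trace := by
  have hΨd : IsUnit Ψ.det := hΨ.det_pos.ne'.isUnit
  have hΨii : Ψ⁻¹⁻¹ = Ψ := Matrix.nonsing_inv_nonsing_inv Ψ hΨd
  by_cases hc : (Ψ * Wᴴ * W).trace = 0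
  · -- then W = 0
    obtain rfl : W = 0 := by
      obtain ⟨R, hRR, hRh⟩ : ∃ R : Matrix (Fin K) (Fin K) ℂ, R * R = Ψ ∧ Rᴴ = R := by
        open MatrixOrder in
        exact ⟨CFC.sqrt Ψ, CFC.sqrt_mul_sqrt_self Ψ hΨ.posSemidef.nonneg,
          IsSelfAdjoint.of_nonneg (CFC.sqrt_nonneg Ψ)⟩
      have htr : ((W * R)ᴴ * (W * R)).trace = 0 := by
        have e : (W * R)ᴴ * (W * R) = R * (Wᴴ * W * R) := by
          rw [Matrix.conjTranspose_mul, hRh]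
          simp [Matrix.mul_assoc]
        rw [e, Matrix.trace_mul_comm, Matrix.mul_assoc, hRR, Matrix.trace_mul_comm]
        simpa [Matrix.mul_assoc] using hc
      have hWR : W * R = 0 := trace_conjTranspose_mul_self_eq_zero' htr
      have hWΨ : W * Ψ = 0 := by
        rw [← hRR, ← Matrix.mul_assoc, hWR, Matrix.zero_mul]
      calc W = W * Ψ * Ψ⁻¹ := by rw [Matrix.mul_assoc, Matrix.mul_nonsing_inv Ψ hΨd, Matrix.mul_one]
      _ = 0 := by rw [hWΨ, Matrix.zero_mul]
    simp [hΨii]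
  · set c := (Ψ * Wᴴ * W).trace with hcdef
    set α : ℂ := ((σ2 / P : ℝ) : ℂ) * c with hαdef
    have hα : α ≠ 0 := by
      apply mul_ne_zero _ hc
      exact_mod_cast (div_pos hσ hP).ne'
    have hΨu : IsUnit (Ψ⁻¹) := (Matrix.isUnit_iff_isUnit_det _).2 (Ψ.isUnit_nonsing_inv_det hΨd)
    have hCmul : (α⁻¹ • (1 : Matrix (Fin N) (Fin N) ℂ)) * (α • 1) = 1 := by
      simp [smul_smul, inv_mul_cancel₀ hα, mul_inv_cancel₀ hα]
    have hC : IsUnit (α⁻¹ • (1 : Matrix (Fin N) (Fin N) ℂ)) := (Matrix.isUnit_iff_isUnit_det _).2 (Matrix.isUnit_det_of_right_inverse hCmul)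
    have hCinv : (α⁻¹ • (1 : Matrix (Fin N) (Fin N) ℂ))⁻¹ = α • 1 :=
      Matrix.inv_eq_right_inv hCmul
    have hVeq : (α⁻¹ • (1 : Matrix (Fin N) (Fin N) ℂ))⁻¹ + (Hᴴ * W) * Ψ⁻¹⁻¹ * (Wᴴ * H) = V := by
      rw [hCinv, hΨii, hV]
      simp [Matrix.mul_assoc]
    have hAC : IsUnit ((α⁻¹ • (1 : Matrix (Fin N) (Fin N) ℂ))⁻¹ + (Hᴴ * W) * Ψ⁻¹⁻¹ * (Wᴴ * H)) := by
      rw [hVeq]; exact (Matrix.isUnit_iff_isUnit_det _).2 hVinv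
    have hwood := Matrix.add_mul_mul_inv_eq_sub (Ψ⁻¹) (Wᴴ * H) (α⁻¹ • 1) (Hᴴ * W) hΨu hC hAC
    rw [hVeq, hΨii] at hwood
    have hMeq : Ψ⁻¹ + ((P : ℂ) / ((σ2 : ℂ) * c)) • (Wᴴ * H * Hᴴ * W)
        = Ψ⁻¹ + (Wᴴ * H) * (α⁻¹ • (1 : Matrix (Fin N) (Fin N) ℂ)) * (Hᴴ * W) := by
      have hs : (P : ℂ) / ((σ2 : ℂ) * c) = α⁻¹ := by
        rw [hαdef]
        push_cast
        rw [mul_inv, div_eq_mul_inv, mul_inv]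
        field_simp
      rw [hs]
      congr 1
      simp [Matrix.mul_smul, Matrix.smul_mul, Matrix.mul_assoc]
    rw [hMeq, hwood, Matrix.trace_sub]
    congr 1
    simp [Matrix.mul_assoc]
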